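/- Let $X$ be a finite connected pure 2-dimensional simplicial complex with vertex set $V$, and regard its 1-skeleton as a graph $G_V$. Suppose $A$ is a nonempty proper subset of $V$ attaining the minimum in $H(X) = \min_{0 < |A| < |V|} \frac{|V| \cdot |F(A, V \setminus A)|}{|A| \cdot |V \setminus A|}$. Then the subgraph of $G_V$ induced by $A$ is connected. -/

import Mathlib

open scoped Classical

/-- The 1-skeleton of a pure simplicial complex given by its top-dimensional faces:
two vertices are adjacent iff they are distinct and lie in a common face. -/
def skeleton {V : Type*} (faces : Finset (Finset V)) : SimpleGraph V where
  Adj u v := u ≠ v ∧ ∃ f ∈ faces, u ∈ f ∧ v ∈ f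
  symm := by
    constructor
    rintro u v ⟨h, f, hf, hu, hv⟩
    exact ⟨h.symm, f, hf, hv, hu⟩
  loopless := by
    constructor
    rintro v ⟨h, -⟩
    exact h rfl

lemma cross_edge {V : Type*} {G : SimpleGraph V} {A : Finset V} [DecidableEq V]
    {u v : V} (p : G.Walk u v) (hv : v ∉ A) :
    u ∈ A → ∃ a b, a ∈ A ∧ b ∉ A ∧ G.Adj a b := by
  induction p with
  | nil => exact fun h => absurd h hv
  | @cons u m w h p ih =>
    intro hu
    by_cases hm : m ∈ A
    · exact ih hv hm
    · exact ⟨u, m, hu, hm, h⟩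

lemma arith_aux (n a1 a2 e1 e2 : ℝ)
    (ha1 : 0 < a1) (ha2 : 0 < a2) (he : 0 < e1 + e2) (hn : 0 < n)
    (h1 : n * (e1 + e2) * (a1 * (n - a1)) ≤ n * e1 * ((a1 + a2) * (n - (a1 + a2))))
    (h2 : n * (e1 + e2) * (a2 * (n - a2)) ≤ n * e2 * ((a1 + a2) * (n - (a1 + a2)))) :
    False := by
  nlinarith [mul_pos ha1 ha2, mul_pos hn he, mul_pos (mul_pos hn he) (mul_pos ha1 ha2)]

theorem stmt8 {V : Type*} [Fintype V] [DecidableEq V]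
    (faces : Finset (Finset V))
    (hpure : ∀ f ∈ faces, f.card = 3)
    (hcover : ∀ v : V, ∃ f ∈ faces, v ∈ f)
    (hconn : (skeleton faces).Connected)
    (A : Finset V) (hA1 : 0 < A.card) (hA2 : A.card < Fintype.card V)
    (hmin : ∀ A' : Finset V, 0 < A'.card → A'.card < Fintype.card V →
      ((Fintype.card V : ℝ) *
          ((faces.filter (fun f => (∃ v ∈ f, v ∈ A) ∧ (∃ v ∈ f, v ∉ A))).card : ℝ)) /
        ((A.card : ℝ) * ((Fintype.card V : ℝ) - (A.card : ℝ))) ≤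
      ((Fintype.card V : ℝ) *
          ((faces.filter (fun f => (∃ v ∈ f, v ∈ A') ∧ (∃ v ∈ f, v ∉ A'))).card : ℝ)) /
        ((A'.card : ℝ) * ((Fintype.card V : ℝ) - (A'.card : ℝ)))) :
    ((skeleton faces).induce (↑A : Set V)).Connected := by
  classical
  set G := skeleton faces with hGdef
  rw [SimpleGraph.connected_iff]
  obtain ⟨x0, hx0⟩ := Finset.card_pos.mp hA1
  refine ⟨?_, ⟨⟨x0, hx0⟩⟩⟩
  by_contra hpre
  rw [SimpleGraph.Preconnected] at hpre
  push_neg at hpre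
  obtain ⟨u, w, huw⟩ := hpre
  -- A₁ : vertices of A reachable from u within the induced graph
  set A₁ : Finset V := A.filter
    (fun a => ∃ h : a ∈ (↑A : Set V), (G.induce (↑A : Set V)).Reachable u ⟨a, h⟩) with hA₁def
  set A₂ : Finset V := A \ A₁ with hA₂def
  have hA₁sub : A₁ ⊆ A := Finset.filter_subset _ _
  have huA₁ : (u : V) ∈ A₁ := by
    refine Finset.mem_filter.mpr ⟨u.2, u.2, ?_⟩
    exact SimpleGraph.Reachable.refl u
  have hwA₂ : (w : V) ∈ A₂ := by
    refine Finset.mem_sdiff.mpr ⟨w.2, ?_⟩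
    intro hw
    obtain ⟨-, h, hr⟩ := Finset.mem_filter.mp hw
    exact huw (by convert hr)
  -- no edges between A₁ and A₂
  have hadj : ∀ a ∈ A₁, ∀ b ∈ A₂, ¬ G.Adj a b := by
    intro a ha b hb hab
    obtain ⟨haA, ha', hr⟩ := Finset.mem_filter.mp ha
    obtain ⟨hbA, hbn⟩ := Finset.mem_sdiff.mp hb
    apply hbn
    refine Finset.mem_filter.mpr ⟨hbA, hbA, ?_⟩
    refine hr.trans (SimpleGraph.Adj.reachable ?_)
    exact hab
  -- a face cannot touch both A₁ and A₂
  have hface : ∀ f ∈ faces, (∃ v ∈ f, v ∈ A₁) → (∃ v ∈ f, v ∈ A₂) → False := by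
    intro f hf ⟨a, haf, ha⟩ ⟨b, hbf, hb⟩
    have hne : a ≠ b := by
      rintro rfl
      exact (Finset.mem_sdiff.mp hb).2 ha
    exact hadj a ha b hb ⟨hne, f, hf, haf, hbf⟩
  set F : Finset V → Finset (Finset V) :=
    fun S => faces.filter (fun f => (∃ v ∈ f, v ∈ S) ∧ (∃ v ∈ f, v ∉ S)) with hFdef
  -- splitting of cut faces
  have hsplit : F A = F A₁ ∪ F A₂ := by
    ext f
    simp only [hFdef, Finset.mem_union, Finset.mem_filter]
    constructor
    · rintro ⟨hf, ⟨a, haf, ha⟩, ⟨b, hbf, hb⟩⟩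
      by_cases h1 : a ∈ A₁
      · exact Or.inl ⟨hf, ⟨a, haf, h1⟩, ⟨b, hbf, fun hb1 => hb (hA₁sub hb1)⟩⟩
      · have ha2 : a ∈ A₂ := Finset.mem_sdiff.mpr ⟨ha, h1⟩
        refine Or.inr ⟨hf, ⟨a, haf, ha2⟩, ⟨b, hbf, ?_⟩⟩
        intro hb2
        exact hb ((Finset.sdiff_subset) hb2)
    · rintro (⟨hf, ⟨a, haf, ha⟩, ⟨b, hbf, hb⟩⟩ | ⟨hf, ⟨a, haf, ha⟩, ⟨b, hbf, hb⟩⟩)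
      · refine ⟨hf, ⟨a, haf, hA₁sub ha⟩, ⟨b, hbf, ?_⟩⟩
        intro hbA
        rcases (em (b ∈ A₁)) with h1 | h1
        · exact hb h1
        · exact hface f hf ⟨a, haf, ha⟩ ⟨b, hbf, Finset.mem_sdiff.mpr ⟨hbA, h1⟩⟩
      · refine ⟨hf, ⟨a, haf, Finset.sdiff_subset ha⟩, ⟨b, hbf, ?_⟩⟩
        intro hbA
        rcases (em (b ∈ A₁)) with h1 | h1
        · exact hface f hf ⟨b, hbf, h1⟩ ⟨a, haf, ha⟩
        · exact hb (Finset.mem_sdiff.mpr ⟨hbA, h1⟩)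
  have hdisj : Disjoint (F A₁) (F A₂) := by
    rw [Finset.disjoint_left]
    intro f h1 h2
    obtain ⟨hf, t1, -⟩ := Finset.mem_filter.mp h1
    obtain ⟨-, t2, -⟩ := Finset.mem_filter.mp h2
    exact hface f hf t1 t2
  have hcard : (F A).card = (F A₁).card + (F A₂).card := by
    rw [hsplit, Finset.card_union_of_disjoint hdisj]
  -- the cut is nonempty
  have hFApos : 0 < (F A).card := by
    have hAne : A ≠ Finset.univ := by
      intro h; rw [h, Finset.card_univ] at hA2; exact lt_irrefl _ hA2
    obtain ⟨y, hy⟩ : ∃ y, y ∉ A := by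
      by_contra h; push_neg at h
      exact hAne (Finset.eq_univ_iff_forall.mpr h)
    obtain ⟨p⟩ := hconn.preconnected x0 y
    obtain ⟨a, b, ha, hb, hab⟩ := cross_edge p hy hx0
    obtain ⟨hne, f, hf, haf, hbf⟩ := hab
    refine Finset.card_pos.mpr ⟨f, Finset.mem_filter.mpr ⟨hf, ⟨a, haf, ha⟩, ⟨b, hbf, hb⟩⟩⟩
  -- cardinalities
  have hA₁pos : 0 < A₁.card := Finset.card_pos.mpr ⟨u, huA₁⟩
  have hA₂pos : 0 < A₂.card := Finset.card_pos.mpr ⟨w, hwA₂⟩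
  have hsum : A₁.card + A₂.card = A.card := by
    have := Finset.card_le_card hA₁sub
    rw [hA₂def, Finset.card_sdiff_of_subset hA₁sub]; omega
  have hA₁lt : A₁.card < Fintype.card V :=
    lt_of_le_of_lt (Finset.card_le_card hA₁sub) hA2
  have hA₂lt : A₂.card < Fintype.card V :=
    lt_of_le_of_lt (Finset.card_le_card Finset.sdiff_subset) hA2
  have h1 := hmin A₁ hA₁pos hA₁lt
  have h2 := hmin A₂ hA₂pos hA₂lt
  have hFA1 : (faces.filter (fun f => (∃ v ∈ f, v ∈ A₁) ∧ (∃ v ∈ f, v ∉ A₁))) = F A₁ := rfl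
  have hFA2 : (faces.filter (fun f => (∃ v ∈ f, v ∈ A₂) ∧ (∃ v ∈ f, v ∉ A₂))) = F A₂ := rfl
  have hFA : (faces.filter (fun f => (∃ v ∈ f, v ∈ A) ∧ (∃ v ∈ f, v ∉ A))) = F A := rfl
  rw [hFA, hFA1] at h1
  rw [hFA, hFA2] at h2
  have hacast : (A.card : ℝ) = (A₁.card : ℝ) + (A₂.card : ℝ) := by exact_mod_cast hsum.symm
  have hecast : ((F A).card : ℝ) = ((F A₁).card : ℝ) + ((F A₂).card : ℝ) := by
    exact_mod_cast hcard
  have ha1pos : (0:ℝ) < (A₁.card : ℝ) := by exact_mod_cast hA₁pos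
  have ha2pos : (0:ℝ) < (A₂.card : ℝ) := by exact_mod_cast hA₂pos
  have hepos : (0:ℝ) < ((F A).card : ℝ) := by exact_mod_cast hFApos
  have haltn : ((A.card : ℝ)) < (Fintype.card V : ℝ) := by exact_mod_cast hA2
  have hn1 : (0:ℝ) < (Fintype.card V : ℝ) - (A₁.card : ℝ) := by
    have : ((A₁.card : ℝ)) < (Fintype.card V : ℝ) := by exact_mod_cast hA₁lt
    linarith
  have hn2 : (0:ℝ) < (Fintype.card V : ℝ) - (A₂.card : ℝ) := by
    have : ((A₂.card : ℝ)) < (Fintype.card V : ℝ) := by exact_mod_cast hA₂lt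
    linarith
  have hapos : (0:ℝ) < (A.card : ℝ) := by exact_mod_cast hA1
  have hna : (0:ℝ) < (Fintype.card V : ℝ) - (A.card : ℝ) := by linarith
  have hnpos : (0:ℝ) < (Fintype.card V : ℝ) := by linarith
  rw [div_le_div_iff₀ (mul_pos hapos hna) (mul_pos ha1pos hn1)] at h1
  rw [div_le_div_iff₀ (mul_pos hapos hna) (mul_pos ha2pos hn2)] at h2
  rw [hacast, hecast] at h1 h2
  rw [hecast] at hepos
  exact arith_aux _ _ _ _ _ ha1pos ha2pos hepos hnpos h1 h2
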